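/- arXiv:2603.18668 — 2 statements merged into one kernel-verified Lean document; each statement's English description precedes it below -/
import Mathlib

section
/- Let n = 2. The optimal approximation ratios admit the explicit expressions: R_V*(ρ,σ) = max({1} ∪ {1/f(ρ₂(s), ρ₁(s′)) : s ≺ s′}), R_C*(ρ,σ) = max({1} ∪ {f(1/ρ₂(s), 1/ρ₁(s′)) : s ≺ s′}), and R_D*(ρ,σ) = max({1} ∪ {min(1/ρ₂(s), 1/ρ₁(s′)) : s ≺ s′}), where each maximum ranges over the finitely many pairs of profiles s ≺ s′ in [k]×[k]. -/
namespace Stmt18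

variable {k : ℕ}

noncomputable def rho1 (v1 v2 : Fin k × Fin k → ℝ) (s : Fin k × Fin k) : ℝ :=
  v1 s / max (v1 s) (v2 s)

noncomputable def rho2 (v1 v2 : Fin k × Fin k → ℝ) (s : Fin k × Fin k) : ℝ :=
  v2 s / max (v1 s) (v2 s)

/-- One step of the reachability relation. -/
def step (v1 v2 : Fin k × Fin k → ℝ) (p q : Fin k × Fin k) : Prop :=
  (p.2 = q.2 ∧ v1 p < v1 q) ∨ (p.1 = q.1 ∧ v2 q < v2 p)

/-- The conflict function `f`. -/
noncomputable def conflictF (u v : ℝ) : ℝ :=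
  if u = 1 ∧ v = 1 then 1 else (u * v - 1) / (u + v - 2)

/-- Membership in the truthful polytope `T(σ)` (two agents). -/
def InT (v1 v2 x1 x2 : Fin k × Fin k → ℝ) : Prop :=
  (∀ s, 0 ≤ x1 s ∧ x1 s ≤ 1) ∧ (∀ s, 0 ≤ x2 s ∧ x2 s ≤ 1) ∧
  (∀ s, x1 s + x2 s = 1) ∧
  (∀ a b c : Fin k, v1 (a, c) < v1 (b, c) → x1 (a, c) ≤ x1 (b, c)) ∧
  (∀ a c d : Fin k, v2 (a, c) < v2 (a, d) → x2 (a, c) ≤ x2 (a, d))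

/-- The allocation rule is deterministic. -/
def Deterministic (x1 x2 : Fin k × Fin k → ℝ) : Prop :=
  (∀ s, x1 s = 0 ∨ x1 s = 1) ∧ (∀ s, x2 s = 0 ∨ x2 s = 1)

/-- Value approximation ratio (two agents). -/
noncomputable def RV [NeZero k] (v1 v2 x1 x2 : Fin k × Fin k → ℝ) : ℝ :=
  Finset.univ.sup' Finset.univ_nonempty
    (fun s : Fin k × Fin k => (x1 s * rho1 v1 v2 s + x2 s * rho2 v1 v2 s)⁻¹)

/-- Cost approximation ratio (two agents). -/
noncomputable def RC [NeZero k] (v1 v2 x1 x2 : Fin k × Fin k → ℝ) : ℝ :=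
  Finset.univ.sup' Finset.univ_nonempty
    (fun s : Fin k × Fin k => x1 s / rho1 v1 v2 s + x2 s / rho2 v1 v2 s)

section Key

variable {u v U V t t' : ℝ}

lemma conflictF_pos (hu0 : 0 < u) (hu1 : u ≤ 1) (hv0 : 0 < v) (hv1 : v ≤ 1) :
    0 < conflictF u v := by
  unfold conflictF
  split_ifs with h
  · norm_num
  · rcases not_and_or.mp h with h' | h'
    · have hu : u < 1 := lt_of_le_of_ne hu1 h'
      have h1 : u * v ≤ u := mul_le_of_le_one_right hu0.le hv1
      apply div_pos_of_neg_of_neg <;> nlinarith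
    · have hv : v < 1 := lt_of_le_of_ne hv1 h'
      have h1 : u * v ≤ v := mul_le_of_le_one_left hv0.le hu1
      apply div_pos_of_neg_of_neg <;> nlinarith

lemma conflictF_eq (h : ¬(u = 1 ∧ v = 1)) (h2 : u + v < 2) :
    conflictF u v = (1 - u * v) / (2 - u - v) := by
  rw [conflictF, if_neg h, div_eq_div_iff (by linarith) (by linarith)]
  ring

lemma keyV (hu0 : 0 < u) (hu1 : u ≤ 1) (hv0 : 0 < v) (hv1 : v ≤ 1)
    (ht0 : 0 ≤ t) (ht1' : t' ≤ 1) (htt : t ≤ t') :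
    min (t + (1 - t) * u) (t' * v + (1 - t')) ≤ conflictF u v := by
  by_cases h : u = 1 ∧ v = 1
  · rw [conflictF, if_pos h, h.2]
    have : t' * 1 + (1 - t') = 1 := by ring
    calc min (t + (1 - t) * u) (t' * 1 + (1 - t')) ≤ t' * 1 + (1 - t') := min_le_right _ _
    _ = 1 := this
  · have h2 : u + v < 2 := by
      rcases not_and_or.mp h with h' | h'
      · have := lt_of_le_of_ne hu1 h'; linarith
      · have := lt_of_le_of_ne hv1 h'; linarith
    rw [conflictF_eq h h2]
    have hd : (0:ℝ) < 2 - u - v := by linarith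
    rcases le_total t ((1 - u) / (2 - u - v)) with hle | hle
    · refine le_trans (min_le_left _ _) ?_
      rw [le_div_iff₀ hd]
      have h3 : t * (2 - u - v) ≤ 1 - u := (le_div_iff₀ hd).mp hle
      nlinarith [mul_le_mul_of_nonneg_left h3 (by linarith : (0:ℝ) ≤ 1 - u)]
    · refine le_trans (min_le_right _ _) ?_
      rw [le_div_iff₀ hd]
      have h3 : 1 - u ≤ t' * (2 - u - v) := (div_le_iff₀ hd).mp (le_trans hle htt)
      nlinarith [mul_le_mul_of_nonneg_left h3 (by linarith : (0:ℝ) ≤ 1 - v)]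

lemma keyC (hU : 1 ≤ U) (hV : 1 ≤ V) (ht1' : t' ≤ 1) (ht0 : 0 ≤ t) (htt : t ≤ t') :
    conflictF U V ≤ max (t + (1 - t) * U) (t' * V + (1 - t')) := by
  by_cases h : U = 1 ∧ V = 1
  · rw [conflictF, if_pos h, h.2]
    calc (1:ℝ) = t' * 1 + (1 - t') := by ring
    _ ≤ max (t + (1 - t) * U) (t' * 1 + (1 - t')) := le_max_right _ _
  · have h2 : 2 < U + V := by
      rcases not_and_or.mp h with h' | h'
      · have := lt_of_le_of_ne hU (Ne.symm h'); linarith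
      · have := lt_of_le_of_ne hV (Ne.symm h'); linarith
    rw [conflictF, if_neg h]
    have hd : (0:ℝ) < U + V - 2 := by linarith
    rcases le_total t ((U - 1) / (U + V - 2)) with hle | hle
    · refine le_trans ?_ (le_max_left _ _)
      rw [div_le_iff₀ hd]
      have h3 : t * (U + V - 2) ≤ U - 1 := (le_div_iff₀ hd).mp hle
      nlinarith [mul_le_mul_of_nonneg_left h3 (by linarith : (0:ℝ) ≤ U - 1)]
    · refine le_trans ?_ (le_max_right _ _)
      rw [div_le_iff₀ hd]
      have h3 : U - 1 ≤ t' * (U + V - 2) := (div_le_iff₀ hd).mp (le_trans hle htt)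
      nlinarith [mul_le_mul_of_nonneg_left h3 (by linarith : (0:ℝ) ≤ V - 1)]

end Key

section Rho
variable {v1 v2 : Fin k × Fin k → ℝ}

lemma rho1_pos (hv1 : ∀ s, 0 < v1 s) (s) : 0 < rho1 v1 v2 s :=
  div_pos (hv1 s) (lt_max_of_lt_left (hv1 s))

lemma rho2_pos (hv1 : ∀ s, 0 < v1 s) (hv2 : ∀ s, 0 < v2 s) (s) : 0 < rho2 v1 v2 s :=
  div_pos (hv2 s) (lt_max_of_lt_left (hv1 s))

lemma rho1_le_one (hv1 : ∀ s, 0 < v1 s) (s) : rho1 v1 v2 s ≤ 1 :=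
  div_le_one_of_le₀ (le_max_left _ _) (le_max_of_le_left (hv1 s).le)

lemma rho2_le_one (hv1 : ∀ s, 0 < v1 s) (s) : rho2 v1 v2 s ≤ 1 :=
  div_le_one_of_le₀ (le_max_right _ _) (le_max_of_le_left (hv1 s).le)

lemma rho_dichotomy (hv1 : ∀ s, 0 < v1 s) (hv2 : ∀ s, 0 < v2 s) (s) :
    rho1 v1 v2 s = 1 ∨ rho2 v1 v2 s = 1 := by
  rcases max_cases (v1 s) (v2 s) with ⟨h, _⟩ | ⟨h, _⟩
  · left; rw [rho1, h, div_self (hv1 s).ne']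
  · right; rw [rho2, h, div_self (hv2 s).ne']

end Rho

section Reach

variable (v1 v2 : Fin k × Fin k → ℝ)

def reach (p q : Fin k × Fin k) : Prop :=
  p = q ∨ Relation.TransGen (step v1 v2) p q

open Classical in
noncomputable def Xof [NeZero k] (need : Fin k × Fin k → ℝ) (s : Fin k × Fin k) : ℝ :=
  Finset.univ.sup' Finset.univ_nonempty
    (fun t => if reach v1 v2 t s then need t else 0)

variable {v1 v2} [NeZero k] {need : Fin k × Fin k → ℝ} {s s' : Fin k × Fin k}

lemma le_Xof : need s ≤ Xof v1 v2 need s := by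
  classical
  have := Finset.le_sup' (fun t => if reach v1 v2 t s then need t else 0)
    (Finset.mem_univ s)
  rw [if_pos (show reach v1 v2 s s from Or.inl rfl)] at this
  simpa only [Xof] using this

lemma Xof_le {c : ℝ} (hc : 0 ≤ c) (h : ∀ t, reach v1 v2 t s → need t ≤ c) :
    Xof v1 v2 need s ≤ c := by
  classical
  apply Finset.sup'_le
  intro t _
  split_ifs with ht
  · exact h t ht
  · exact hc

lemma Xof_nonneg (h : ∀ t, 0 ≤ need t) : 0 ≤ Xof v1 v2 need s :=
  le_trans (h s) le_Xof

lemma Xof_mono (h0 : ∀ t, 0 ≤ need t) (h : Relation.TransGen (step v1 v2) s s') :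
    Xof v1 v2 need s ≤ Xof v1 v2 need s' := by
  classical
  apply Finset.sup'_le
  intro t _
  split_ifs with ht
  · have hreach : reach v1 v2 t s' := by
      rcases ht with rfl | ht
      · exact Or.inr h
      · exact Or.inr (ht.trans h)
    have := Finset.le_sup' (fun t => if reach v1 v2 t s' then need t else 0)
      (Finset.mem_univ t)
    rw [if_pos hreach] at this
    simpa only [Xof] using this
  · exact Xof_nonneg h0

lemma Xof_mem_01 (h : ∀ t, need t = 0 ∨ need t = 1) :
    Xof v1 v2 need s = 0 ∨ Xof v1 v2 need s = 1 := by
  classical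
  obtain ⟨b, _, hb⟩ := Finset.exists_mem_eq_sup' (Finset.univ_nonempty)
    (fun t => if reach v1 v2 t s then need t else 0)
  rw [Xof, hb]
  split_ifs with hr
  · exact h b
  · exact Or.inl rfl

lemma Xof_exists_one (h : Xof v1 v2 need s = 1) (h0 : ∀ t, need t = 0 ∨ need t = 1) :
    ∃ t, reach v1 v2 t s ∧ need t = 1 := by
  classical
  obtain ⟨b, _, hb⟩ := Finset.exists_mem_eq_sup' (Finset.univ_nonempty)
    (fun t => if reach v1 v2 t s then need t else 0)
  rw [Xof] at h
  rw [h] at hb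
  by_cases hr : reach v1 v2 b s
  · rw [if_pos hr] at hb
    exact ⟨b, hr, hb.symm⟩
  · rw [if_neg hr] at hb; norm_num at hb

/-- The constructed allocation is in the truthful polytope. -/
lemma Xof_inT (h0 : ∀ t, 0 ≤ need t) (h1 : ∀ t, need t ≤ 1) :
    InT v1 v2 (Xof v1 v2 need) (fun s => 1 - Xof v1 v2 need s) := by
  have hb : ∀ s : Fin k × Fin k, 0 ≤ Xof v1 v2 need s ∧ Xof v1 v2 need s ≤ 1 :=
    fun s => ⟨Xof_nonneg h0, Xof_le zero_le_one (fun t _ => h1 t)⟩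
  refine ⟨hb,
    fun s => ⟨by show (0:ℝ) ≤ 1 - Xof v1 v2 need s; linarith [(hb s).2],
      by show (1:ℝ) - Xof v1 v2 need s ≤ 1; linarith [(hb s).1]⟩,
    fun s => by show Xof v1 v2 need s + (1 - Xof v1 v2 need s) = 1; ring, ?_, ?_⟩
  · intro a b c hlt
    exact Xof_mono h0 (Relation.TransGen.single (Or.inl ⟨rfl, hlt⟩))
  · intro a c d hlt
    have : Xof v1 v2 need (a, d) ≤ Xof v1 v2 need (a, c) :=
      Xof_mono h0 (Relation.TransGen.single (Or.inr ⟨rfl, hlt⟩))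
    show (1:ℝ) - Xof v1 v2 need (a, c) ≤ 1 - Xof v1 v2 need (a, d)
    linarith

/-- Monotonicity of `x1` along a single step, for truthful rules. -/
lemma x1_mono_step {x1 x2 : Fin k × Fin k → ℝ} (hT : InT v1 v2 x1 x2)
    {p q : Fin k × Fin k} (h : step v1 v2 p q) : x1 p ≤ x1 q := by
  obtain ⟨_, _, hsum, h4, h5⟩ := hT
  obtain ⟨a, c⟩ := p; obtain ⟨b, d⟩ := q
  rcases h with ⟨h2, hlt⟩ | ⟨h1, hlt⟩
  · dsimp at h2; subst h2
    exact h4 a b c hlt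
  · dsimp at h1; subst h1
    have := h5 a d c hlt
    have e1 := hsum (a, c); have e2 := hsum (a, d)
    linarith

/-- Monotonicity of `x1` along the reachability relation, for truthful rules. -/
lemma x1_mono {x1 x2 : Fin k × Fin k → ℝ} (hT : InT v1 v2 x1 x2)
    (h : Relation.TransGen (step v1 v2) s s') : x1 s ≤ x1 s' := by
  induction h with
  | single hst => exact x1_mono_step hT hst
  | tail _ hst ih => exact le_trans ih (x1_mono_step hT hst)

end Reach

section Lower

variable {k : ℕ} [NeZero k] {v1 v2 : Fin k × Fin k → ℝ}

lemma denom_pos (hv1 : ∀ s, 0 < v1 s) (hv2 : ∀ s, 0 < v2 s)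
    {x1 x2 : Fin k × Fin k → ℝ} (hT : InT v1 v2 x1 x2) (s : Fin k × Fin k) :
    0 < x1 s * rho1 v1 v2 s + x2 s * rho2 v1 v2 s := by
  obtain ⟨hx1, hx2, hsum, -, -⟩ := hT
  have m1 := rho1_pos (v2 := v2) hv1 s
  have m2 := rho2_pos hv1 hv2 s
  set m := min (rho1 v1 v2 s) (rho2 v1 v2 s) with hm
  have hmpos : 0 < m := lt_min m1 m2
  have h1 : x1 s * m ≤ x1 s * rho1 v1 v2 s :=
    mul_le_mul_of_nonneg_left (min_le_left _ _) (hx1 s).1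
  have h2 : x2 s * m ≤ x2 s * rho2 v1 v2 s :=
    mul_le_mul_of_nonneg_left (min_le_right _ _) (hx2 s).1
  have h3 : x1 s * m + x2 s * m = m := by
    rw [← add_mul, hsum s, one_mul]
  linarith

lemma denom_le_one (hv1 : ∀ s, 0 < v1 s)
    {x1 x2 : Fin k × Fin k → ℝ} (hT : InT v1 v2 x1 x2) (s : Fin k × Fin k) :
    x1 s * rho1 v1 v2 s + x2 s * rho2 v1 v2 s ≤ 1 := by
  obtain ⟨hx1, hx2, hsum, -, -⟩ := hT
  have h1 : x1 s * rho1 v1 v2 s ≤ x1 s :=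
    mul_le_of_le_one_right (hx1 s).1 (rho1_le_one hv1 s)
  have h2 : x2 s * rho2 v1 v2 s ≤ x2 s :=
    mul_le_of_le_one_right (hx2 s).1 (rho2_le_one hv1 s)
  linarith [hsum s]

lemma term_le_RV {x1 x2 : Fin k × Fin k → ℝ} (s : Fin k × Fin k) :
    (x1 s * rho1 v1 v2 s + x2 s * rho2 v1 v2 s)⁻¹ ≤ RV v1 v2 x1 x2 :=
  Finset.le_sup' (fun s => (x1 s * rho1 v1 v2 s + x2 s * rho2 v1 v2 s)⁻¹)
    (Finset.mem_univ s)

lemma term_le_RC {x1 x2 : Fin k × Fin k → ℝ} (s : Fin k × Fin k) :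
    x1 s / rho1 v1 v2 s + x2 s / rho2 v1 v2 s ≤ RC v1 v2 x1 x2 :=
  Finset.le_sup' (fun s => x1 s / rho1 v1 v2 s + x2 s / rho2 v1 v2 s)
    (Finset.mem_univ s)

lemma one_le_RV (hv1 : ∀ s, 0 < v1 s) (hv2 : ∀ s, 0 < v2 s)
    {x1 x2 : Fin k × Fin k → ℝ} (hT : InT v1 v2 x1 x2) :
    1 ≤ RV v1 v2 x1 x2 := by
  obtain ⟨s₀, -⟩ := Finset.univ_nonempty (α := Fin k × Fin k)
  refine le_trans ?_ (term_le_RV s₀)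
  exact (one_le_inv₀ (denom_pos hv1 hv2 hT s₀)).mpr (denom_le_one hv1 hT s₀)

lemma one_le_RC (hv1 : ∀ s, 0 < v1 s) (hv2 : ∀ s, 0 < v2 s)
    {x1 x2 : Fin k × Fin k → ℝ} (hT : InT v1 v2 x1 x2) :
    1 ≤ RC v1 v2 x1 x2 := by
  obtain ⟨s₀, -⟩ := Finset.univ_nonempty (α := Fin k × Fin k)
  refine le_trans ?_ (term_le_RC s₀)
  obtain ⟨hx1, hx2, hsum, -, -⟩ := hT
  have h1 : x1 s₀ ≤ x1 s₀ / rho1 v1 v2 s₀ := by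
    rw [le_div_iff₀ (rho1_pos hv1 s₀)]
    exact mul_le_of_le_one_right (hx1 s₀).1 (rho1_le_one hv1 s₀)
  have h2 : x2 s₀ ≤ x2 s₀ / rho2 v1 v2 s₀ := by
    rw [le_div_iff₀ (rho2_pos hv1 hv2 s₀)]
    exact mul_le_of_le_one_right (hx2 s₀).1 (rho2_le_one hv1 s₀)
  linarith [hsum s₀]

lemma lower_V (hv1 : ∀ s, 0 < v1 s) (hv2 : ∀ s, 0 < v2 s)
    {x1 x2 : Fin k × Fin k → ℝ} (hT : InT v1 v2 x1 x2)
    {s s' : Fin k × Fin k} (h : Relation.TransGen (step v1 v2) s s') :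
    1 / conflictF (rho2 v1 v2 s) (rho1 v1 v2 s') ≤ RV v1 v2 x1 x2 := by
  have hx2s : x2 s = 1 - x1 s := by linarith [hT.2.2.1 s]
  have hx2s' : x2 s' = 1 - x1 s' := by linarith [hT.2.2.1 s']
  set u := rho2 v1 v2 s with hu
  set v := rho1 v1 v2 s' with hv
  have hu0 : 0 < u := rho2_pos hv1 hv2 s
  have hu1 : u ≤ 1 := rho2_le_one hv1 s
  have hv0 : 0 < v := rho1_pos hv1 s'
  have hv1' : v ≤ 1 := rho1_le_one hv1 s'
  have hf : 0 < conflictF u v := conflictF_pos hu0 hu1 hv0 hv1'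
  have hmono : x1 s ≤ x1 s' := x1_mono hT h
  have hkey := keyV hu0 hu1 hv0 hv1' (hT.1 s).1 (hT.1 s').2 hmono
  have hds : x1 s * rho1 v1 v2 s + x2 s * rho2 v1 v2 s ≤ x1 s + (1 - x1 s) * u := by
    have : x1 s * rho1 v1 v2 s ≤ x1 s :=
      mul_le_of_le_one_right (hT.1 s).1 (rho1_le_one hv1 s)
    rw [hx2s]; linarith
  have hds' : x1 s' * rho1 v1 v2 s' + x2 s' * rho2 v1 v2 s' ≤ x1 s' * v + (1 - x1 s') := by
    have : x2 s' * rho2 v1 v2 s' ≤ x2 s' :=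
      mul_le_of_le_one_right (hT.2.1 s').1 (rho2_le_one hv1 s')
    rw [hx2s'] at this ⊢; linarith
  have hp := denom_pos hv1 hv2 hT s
  have hp' := denom_pos hv1 hv2 hT s'
  rcases le_total (x1 s + (1 - x1 s) * u) (x1 s' * v + (1 - x1 s')) with hc | hc
  · have hle : x1 s * rho1 v1 v2 s + x2 s * rho2 v1 v2 s ≤ conflictF u v := by
      rw [min_eq_left hc] at hkey; linarith
    calc 1 / conflictF u v ≤ 1 / (x1 s * rho1 v1 v2 s + x2 s * rho2 v1 v2 s) :=
          one_div_le_one_div_of_le hp hle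
      _ = (x1 s * rho1 v1 v2 s + x2 s * rho2 v1 v2 s)⁻¹ := one_div _
      _ ≤ RV v1 v2 x1 x2 := term_le_RV s
  · have hle : x1 s' * rho1 v1 v2 s' + x2 s' * rho2 v1 v2 s' ≤ conflictF u v := by
      rw [min_eq_right hc] at hkey; linarith
    calc 1 / conflictF u v ≤ 1 / (x1 s' * rho1 v1 v2 s' + x2 s' * rho2 v1 v2 s') :=
          one_div_le_one_div_of_le hp' hle
      _ = (x1 s' * rho1 v1 v2 s' + x2 s' * rho2 v1 v2 s')⁻¹ := one_div _
      _ ≤ RV v1 v2 x1 x2 := term_le_RV s'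

lemma lower_C (hv1 : ∀ s, 0 < v1 s) (hv2 : ∀ s, 0 < v2 s)
    {x1 x2 : Fin k × Fin k → ℝ} (hT : InT v1 v2 x1 x2)
    {s s' : Fin k × Fin k} (h : Relation.TransGen (step v1 v2) s s') :
    conflictF (1 / rho2 v1 v2 s) (1 / rho1 v1 v2 s') ≤ RC v1 v2 x1 x2 := by
  have hx2s : x2 s = 1 - x1 s := by linarith [hT.2.2.1 s]
  have hx2s' : x2 s' = 1 - x1 s' := by linarith [hT.2.2.1 s']
  set U := 1 / rho2 v1 v2 s with hU
  set V := 1 / rho1 v1 v2 s' with hV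
  have hu0 : 0 < rho2 v1 v2 s := rho2_pos hv1 hv2 s
  have hv0 : 0 < rho1 v1 v2 s' := rho1_pos hv1 s'
  have hU1 : 1 ≤ U := by
    rw [hU, le_div_iff₀ hu0, one_mul]; exact rho2_le_one hv1 s
  have hV1 : 1 ≤ V := by
    rw [hV, le_div_iff₀ hv0, one_mul]; exact rho1_le_one hv1 s'
  have hmono : x1 s ≤ x1 s' := x1_mono hT h
  have hkey := keyC hU1 hV1 (hT.1 s').2 (hT.1 s).1 hmono
  have hds : x1 s + (1 - x1 s) * U ≤ x1 s / rho1 v1 v2 s + x2 s / rho2 v1 v2 s := by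
    have h1 : x1 s ≤ x1 s / rho1 v1 v2 s := by
      rw [le_div_iff₀ (rho1_pos hv1 s)]
      exact mul_le_of_le_one_right (hT.1 s).1 (rho1_le_one hv1 s)
    have h2 : x2 s / rho2 v1 v2 s = (1 - x1 s) * U := by
      rw [hx2s, hU, div_eq_mul_one_div]
    linarith
  have hds' : x1 s' * V + (1 - x1 s') ≤ x1 s' / rho1 v1 v2 s' + x2 s' / rho2 v1 v2 s' := by
    have h1 : x1 s' / rho1 v1 v2 s' = x1 s' * V := by
      rw [hV, div_eq_mul_one_div]
    have h2 : x2 s' ≤ x2 s' / rho2 v1 v2 s' := by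
      rw [le_div_iff₀ (rho2_pos hv1 hv2 s')]
      exact mul_le_of_le_one_right (hT.2.1 s').1 (rho2_le_one hv1 s')
    linarith [hx2s']
  rcases le_total (x1 s + (1 - x1 s) * U) (x1 s' * V + (1 - x1 s')) with hc | hc
  · rw [max_eq_right hc] at hkey
    exact le_trans (le_trans hkey hds') (term_le_RC s')
  · rw [max_eq_left hc] at hkey
    exact le_trans (le_trans hkey hds) (term_le_RC s)

lemma lower_D (hv1 : ∀ s, 0 < v1 s) (hv2 : ∀ s, 0 < v2 s)
    {x1 x2 : Fin k × Fin k → ℝ} (hT : InT v1 v2 x1 x2) (hD : Deterministic x1 x2)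
    {s s' : Fin k × Fin k} (h : Relation.TransGen (step v1 v2) s s') :
    min (1 / rho2 v1 v2 s) (1 / rho1 v1 v2 s') ≤ RC v1 v2 x1 x2 := by
  have hsum := hT.2.2.1
  have hmono : x1 s ≤ x1 s' := x1_mono hT h
  rcases hD.1 s with h0 | h1
  · have hx2 : x2 s = 1 := by linarith [hsum s]
    refine le_trans (min_le_left _ _) (le_trans ?_ (term_le_RC s))
    rw [h0, hx2, zero_div, zero_add]
  · have hx1' : x1 s' = 1 := by
      rcases hD.1 s' with h0' | h1'
      · rw [h1, h0'] at hmono; linarith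
      · exact h1'
    have hx2' : x2 s' = 0 := by linarith [hsum s']
    refine le_trans (min_le_right _ _) (le_trans ?_ (term_le_RC s'))
    rw [hx1', hx2', zero_div, add_zero]

end Lower


section Construct

variable {k : ℕ} [NeZero k] {v1 v2 : Fin k × Fin k → ℝ}

open Classical in
lemma construct_V (hv1 : ∀ s, 0 < v1 s) (hv2 : ∀ s, 0 < v2 s) {A : ℝ} (hA1 : 1 ≤ A)
    (hApair : ∀ s s', Relation.TransGen (step v1 v2) s s' →
      1 / conflictF (rho2 v1 v2 s) (rho1 v1 v2 s') ≤ A) :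
    ∃ x1 x2, InT v1 v2 x1 x2 ∧ RV v1 v2 x1 x2 ≤ A := by
  have hA0 : (0:ℝ) < A := lt_of_lt_of_le one_pos hA1
  have hAinv1 : A⁻¹ ≤ 1 := inv_le_one_of_one_le₀ hA1
  have hAinv0 : 0 < A⁻¹ := inv_pos.mpr hA0
  set need : Fin k × Fin k → ℝ := fun t =>
    if rho2 v1 v2 t = 1 then 0
    else max 0 ((A⁻¹ - rho2 v1 v2 t) / (1 - rho2 v1 v2 t)) with hneed
  have h0 : ∀ t, 0 ≤ need t := by
    intro t; rw [hneed]; dsimp only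
    split_ifs
    · exact le_refl 0
    · exact le_max_left 0 _
  have h1 : ∀ t, need t ≤ 1 := by
    intro t; rw [hneed]; dsimp only
    split_ifs with ht
    · exact zero_le_one
    · have hu1 : rho2 v1 v2 t < 1 := lt_of_le_of_ne (rho2_le_one hv1 t) ht
      refine max_le zero_le_one ?_
      rw [div_le_one (by linarith)]
      linarith
  refine ⟨Xof v1 v2 need, fun s => 1 - Xof v1 v2 need s, Xof_inT h0 h1, ?_⟩
  apply Finset.sup'_le
  intro s _
  set X := Xof v1 v2 need s with hX
  have hXmem : 0 ≤ X ∧ X ≤ 1 := ⟨Xof_nonneg h0, Xof_le zero_le_one (fun t _ => h1 t)⟩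
  have hgoal : A⁻¹ ≤ X * rho1 v1 v2 s + (1 - X) * rho2 v1 v2 s := by
    rcases rho_dichotomy hv1 hv2 s with hρ1 | hρ2
    · rw [hρ1]
      by_cases hu : rho2 v1 v2 s = 1
      · rw [hu]; linarith
      · have hu1 : rho2 v1 v2 s < 1 := lt_of_le_of_ne (rho2_le_one hv1 s) hu
        have hXn : need s ≤ X := le_Xof
        have : (A⁻¹ - rho2 v1 v2 s) / (1 - rho2 v1 v2 s) ≤ X := by
          refine le_trans (le_trans (le_max_right 0 _) ?_) hXn
          rw [hneed]; dsimp only; rw [if_neg hu]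
        have h3 : A⁻¹ - rho2 v1 v2 s ≤ X * (1 - rho2 v1 v2 s) :=
          (div_le_iff₀ (by linarith)).mp this
        nlinarith
    · rw [hρ2]
      by_cases hv : rho1 v1 v2 s = 1
      · rw [hv]; linarith
      · have hv1' : rho1 v1 v2 s < 1 := lt_of_le_of_ne (rho1_le_one hv1 s) hv
        set v := rho1 v1 v2 s with hvv
        have hc0 : 0 ≤ (1 - A⁻¹) / (1 - v) := div_nonneg (by linarith) (by linarith)
        have hXc : X ≤ (1 - A⁻¹) / (1 - v) := by
          refine Xof_le hc0 ?_
          intro t ht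
          by_cases hu : rho2 v1 v2 t = 1
          · rw [hneed]; dsimp only; rw [if_pos hu]; exact hc0
          · rw [hneed]; dsimp only; rw [if_neg hu]
            refine max_le hc0 ?_
            set u := rho2 v1 v2 t with huu
            have hu0 : 0 < u := rho2_pos hv1 hv2 t
            have hu1 : u < 1 := lt_of_le_of_ne (rho2_le_one hv1 t) hu
            rcases ht with rfl | htr
            · exact absurd hρ2 hu
            · have hApair' := hApair t s htr
              have hfpos : 0 < conflictF u v :=
                conflictF_pos hu0 hu1.le (rho1_pos hv1 s) hv1'.le
              have hAinvf : A⁻¹ ≤ conflictF u v := by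
                have h4 : 1 / A ≤ 1 / (1 / conflictF u v) :=
                  one_div_le_one_div_of_le (by positivity) hApair'
                rw [one_div_one_div] at h4
                rw [← one_div]; exact h4
              rw [conflictF_eq (fun hh => hu hh.1) (by linarith)] at hAinvf
              have hKey : A⁻¹ * (2 - u - v) ≤ 1 - u * v :=
                (le_div_iff₀ (by linarith)).mp hAinvf
              rw [div_le_div_iff₀ (by linarith) (by linarith)]
              nlinarith
        have h3 : X * (1 - v) ≤ 1 - A⁻¹ := (le_div_iff₀ (by linarith)).mp hXc
        nlinarith
  have hpos : 0 < X * rho1 v1 v2 s + (1 - X) * rho2 v1 v2 s := lt_of_lt_of_le hAinv0 hgoal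
  calc (X * rho1 v1 v2 s + (1 - X) * rho2 v1 v2 s)⁻¹ ≤ (A⁻¹)⁻¹ := by
        apply inv_anti₀ hAinv0 hgoal
    _ = A := inv_inv A

open Classical in
lemma construct_C (hv1 : ∀ s, 0 < v1 s) (hv2 : ∀ s, 0 < v2 s) {B : ℝ} (hB1 : 1 ≤ B)
    (hBpair : ∀ s s', Relation.TransGen (step v1 v2) s s' →
      conflictF (1 / rho2 v1 v2 s) (1 / rho1 v1 v2 s') ≤ B) :
    ∃ x1 x2, InT v1 v2 x1 x2 ∧ RC v1 v2 x1 x2 ≤ B := by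
  set need : Fin k × Fin k → ℝ := fun t =>
    if rho2 v1 v2 t = 1 then 0
    else max 0 ((1 / rho2 v1 v2 t - B) / (1 / rho2 v1 v2 t - 1)) with hneed
  have hUgt : ∀ t, rho2 v1 v2 t ≠ 1 → 1 < 1 / rho2 v1 v2 t := by
    intro t ht
    have h2 := rho2_pos hv1 hv2 t
    have h3 : rho2 v1 v2 t < 1 := lt_of_le_of_ne (rho2_le_one hv1 t) ht
    rw [lt_div_iff₀ h2, one_mul]; exact h3
  have h0 : ∀ t, 0 ≤ need t := by
    intro t; rw [hneed]; dsimp only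
    split_ifs
    · exact le_refl 0
    · exact le_max_left 0 _
  have h1 : ∀ t, need t ≤ 1 := by
    intro t; rw [hneed]; dsimp only
    split_ifs with ht
    · exact zero_le_one
    · have := hUgt t ht
      refine max_le zero_le_one ?_
      rw [div_le_one (by linarith)]
      linarith
  refine ⟨Xof v1 v2 need, fun s => 1 - Xof v1 v2 need s, Xof_inT h0 h1, ?_⟩
  apply Finset.sup'_le
  intro s _
  set X := Xof v1 v2 need s with hX
  have hXmem : 0 ≤ X ∧ X ≤ 1 := ⟨Xof_nonneg h0, Xof_le zero_le_one (fun t _ => h1 t)⟩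
  show X / rho1 v1 v2 s + (1 - X) / rho2 v1 v2 s ≤ B
  rcases rho_dichotomy hv1 hv2 s with hρ1 | hρ2
  · rw [hρ1, div_one]
    by_cases hu : rho2 v1 v2 s = 1
    · rw [hu, div_one]; linarith
    · set U := 1 / rho2 v1 v2 s with hUU
      have hU1 : 1 < U := hUgt s hu
      have hXn : need s ≤ X := le_Xof
      have h2 : (U - B) / (U - 1) ≤ X := by
        refine le_trans (le_trans (le_max_right 0 _) ?_) hXn
        rw [hneed]; dsimp only; rw [if_neg hu]
      have h3 : U - B ≤ X * (U - 1) := (div_le_iff₀ (by linarith)).mp h2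
      have h4 : (1 - X) / rho2 v1 v2 s = (1 - X) * U := by
        rw [hUU, div_eq_mul_one_div]
      rw [h4]; nlinarith
  · rw [hρ2, div_one]
    by_cases hv : rho1 v1 v2 s = 1
    · rw [hv, div_one]; linarith
    · set V := 1 / rho1 v1 v2 s with hVV
      have hv0 : 0 < rho1 v1 v2 s := rho1_pos hv1 s
      have hV1 : 1 < V := by
        rw [hVV, lt_div_iff₀ hv0, one_mul]
        exact lt_of_le_of_ne (rho1_le_one hv1 s) hv
      have hc0 : 0 ≤ (B - 1) / (V - 1) := div_nonneg (by linarith) (by linarith)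
      have hXc : X ≤ (B - 1) / (V - 1) := by
        refine Xof_le hc0 ?_
        intro t ht
        by_cases hu : rho2 v1 v2 t = 1
        · rw [hneed]; dsimp only; rw [if_pos hu]; exact hc0
        · rw [hneed]; dsimp only; rw [if_neg hu]
          refine max_le hc0 ?_
          set U := 1 / rho2 v1 v2 t with hUU
          have hU1 : 1 < U := hUgt t hu
          rcases ht with rfl | htr
          · exact absurd hρ2 hu
          · have hpair := hBpair t s htr
            rw [← hUU, ← hVV] at hpair
            rw [conflictF, if_neg (by rintro ⟨hh, -⟩; exact absurd hh hU1.ne')] at hpair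
            have hKey : U * V - 1 ≤ B * (U + V - 2) :=
              (div_le_iff₀ (by linarith)).mp hpair
            rw [div_le_div_iff₀ (by linarith) (by linarith)]
            nlinarith
      have h3 : X * (V - 1) ≤ B - 1 := (le_div_iff₀ (by linarith)).mp hXc
      have h4 : X / rho1 v1 v2 s = X * V := by rw [hVV, div_eq_mul_one_div]
      rw [h4]; nlinarith

open Classical in
lemma construct_D (hv1 : ∀ s, 0 < v1 s) (hv2 : ∀ s, 0 < v2 s) {D : ℝ} (hD1 : 1 ≤ D)
    (hDpair : ∀ s s', Relation.TransGen (step v1 v2) s s' →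
      min (1 / rho2 v1 v2 s) (1 / rho1 v1 v2 s') ≤ D) :
    ∃ x1 x2, InT v1 v2 x1 x2 ∧ Deterministic x1 x2 ∧ RC v1 v2 x1 x2 ≤ D := by
  set need : Fin k × Fin k → ℝ := fun t =>
    if D < 1 / rho2 v1 v2 t then 1 else 0 with hneed
  have h01 : ∀ t, need t = 0 ∨ need t = 1 := by
    intro t; rw [hneed]; dsimp only
    split_ifs
    · exact Or.inr rfl
    · exact Or.inl rfl
  have h0 : ∀ t, 0 ≤ need t := by
    intro t; rcases h01 t with h | h <;> rw [h] <;> norm_num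
  have h1 : ∀ t, need t ≤ 1 := by
    intro t; rcases h01 t with h | h <;> rw [h] <;> norm_num
  refine ⟨Xof v1 v2 need, fun s => 1 - Xof v1 v2 need s, Xof_inT h0 h1, ?_, ?_⟩
  · constructor
    · intro s; exact Xof_mem_01 h01
    · intro s
      rcases Xof_mem_01 (v1 := v1) (v2 := v2) (need := need) (s := s) h01 with h | h
      · right; show (1:ℝ) - Xof v1 v2 need s = 1; rw [h]; ring
      · left; show (1:ℝ) - Xof v1 v2 need s = 0; rw [h]; ring
  · apply Finset.sup'_le
    intro s _
    show Xof v1 v2 need s / rho1 v1 v2 s + (1 - Xof v1 v2 need s) / rho2 v1 v2 s ≤ D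
    rcases Xof_mem_01 (v1 := v1) (v2 := v2) (need := need) (s := s) h01 with h | h
    · rw [h, zero_div, sub_zero, zero_add]
      by_contra hcon
      push_neg at hcon
      have : need s = 1 := by rw [hneed]; dsimp only; rw [if_pos hcon]
      have := le_Xof (v1 := v1) (v2 := v2) (need := need) (s := s)
      rw [h] at this
      rw [‹need s = 1›] at this
      linarith
    · rw [h, sub_self, zero_div, add_zero]
      obtain ⟨t, ht, hnt⟩ := Xof_exists_one h h01
      have hDt : D < 1 / rho2 v1 v2 t := by
        by_contra hcon
        rw [hneed] at hnt; dsimp only at hnt; rw [if_neg hcon] at hnt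
        norm_num at hnt
      rcases ht with rfl | htr
      · have hρ2lt : rho2 v1 v2 t < 1 := by
          have h2 := rho2_pos hv1 hv2 t
          have : 1 < 1 / rho2 v1 v2 t := lt_of_le_of_lt hD1 hDt
          rw [lt_div_iff₀ h2, one_mul] at this; exact this
        have hρ1 : rho1 v1 v2 t = 1 := by
          rcases rho_dichotomy hv1 hv2 t with h' | h'
          · exact h'
          · exact absurd h' hρ2lt.ne
        rw [hρ1, div_one]; exact hD1
      · have hpair := hDpair t s htr
        rcases min_cases (1 / rho2 v1 v2 t) (1 / rho1 v1 v2 s) with ⟨hmin, _⟩ | ⟨hmin, hmlt⟩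
        · rw [hmin] at hpair; linarith
        · rw [hmin] at hpair
          rw [div_le_iff₀ (rho1_pos hv1 s)] at hpair ⊢
          linarith

end Construct

/-- explicit expressions of the optimal value, cost and deterministic
approximation ratios via conflicting pairs. -/
theorem stmt18 (k : ℕ) [NeZero k] (v1 v2 : Fin k × Fin k → ℝ)
    (hv1 : ∀ s, 0 < v1 s) (hv2 : ∀ s, 0 < v2 s) :
    sInf {r | ∃ x1 x2, InT v1 v2 x1 x2 ∧ RV v1 v2 x1 x2 = r}
      = sSup ({1} ∪ {r | ∃ s s', Relation.TransGen (step v1 v2) s s' ∧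
          r = 1 / conflictF (rho2 v1 v2 s) (rho1 v1 v2 s')}) ∧
    sInf {r | ∃ x1 x2, InT v1 v2 x1 x2 ∧ RC v1 v2 x1 x2 = r}
      = sSup ({1} ∪ {r | ∃ s s', Relation.TransGen (step v1 v2) s s' ∧
          r = conflictF (1 / rho2 v1 v2 s) (1 / rho1 v1 v2 s')}) ∧
    sInf {r | ∃ x1 x2, InT v1 v2 x1 x2 ∧ Deterministic x1 x2 ∧ RC v1 v2 x1 x2 = r}
      = sSup ({1} ∪ {r | ∃ s s', Relation.TransGen (step v1 v2) s s' ∧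
          r = min (1 / rho2 v1 v2 s) (1 / rho1 v1 v2 s')}) := by
  have hbddV : BddAbove ({1} ∪ {r | ∃ s s', Relation.TransGen (step v1 v2) s s' ∧
      r = 1 / conflictF (rho2 v1 v2 s) (rho1 v1 v2 s')} : Set ℝ) := by
    apply Set.Finite.bddAbove
    apply Set.Finite.subset (Set.Finite.insert 1 (Set.finite_range
      (fun p : (Fin k × Fin k) × (Fin k × Fin k) =>
        1 / conflictF (rho2 v1 v2 p.1) (rho1 v1 v2 p.2))))
    rintro r (hr | ⟨s, s', _, rfl⟩)
    · exact Set.mem_insert_iff.mpr (Or.inl hr)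
    · exact Set.mem_insert_iff.mpr (Or.inr ⟨(s, s'), rfl⟩)
  have hbddC : BddAbove ({1} ∪ {r | ∃ s s', Relation.TransGen (step v1 v2) s s' ∧
      r = conflictF (1 / rho2 v1 v2 s) (1 / rho1 v1 v2 s')} : Set ℝ) := by
    apply Set.Finite.bddAbove
    apply Set.Finite.subset (Set.Finite.insert 1 (Set.finite_range
      (fun p : (Fin k × Fin k) × (Fin k × Fin k) =>
        conflictF (1 / rho2 v1 v2 p.1) (1 / rho1 v1 v2 p.2))))
    rintro r (hr | ⟨s, s', _, rfl⟩)
    · exact Set.mem_insert_iff.mpr (Or.inl hr)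
    · exact Set.mem_insert_iff.mpr (Or.inr ⟨(s, s'), rfl⟩)
  have hbddD : BddAbove ({1} ∪ {r | ∃ s s', Relation.TransGen (step v1 v2) s s' ∧
      r = min (1 / rho2 v1 v2 s) (1 / rho1 v1 v2 s')} : Set ℝ) := by
    apply Set.Finite.bddAbove
    apply Set.Finite.subset (Set.Finite.insert 1 (Set.finite_range
      (fun p : (Fin k × Fin k) × (Fin k × Fin k) =>
        min (1 / rho2 v1 v2 p.1) (1 / rho1 v1 v2 p.2))))
    rintro r (hr | ⟨s, s', _, rfl⟩)
    · exact Set.mem_insert_iff.mpr (Or.inl hr)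
    · exact Set.mem_insert_iff.mpr (Or.inr ⟨(s, s'), rfl⟩)
  have h1V : (1:ℝ) ∈ ({1} ∪ {r | ∃ s s', Relation.TransGen (step v1 v2) s s' ∧
      r = 1 / conflictF (rho2 v1 v2 s) (rho1 v1 v2 s')} : Set ℝ) := Or.inl rfl
  have h1C : (1:ℝ) ∈ ({1} ∪ {r | ∃ s s', Relation.TransGen (step v1 v2) s s' ∧
      r = conflictF (1 / rho2 v1 v2 s) (1 / rho1 v1 v2 s')} : Set ℝ) := Or.inl rfl
  have h1D : (1:ℝ) ∈ ({1} ∪ {r | ∃ s s', Relation.TransGen (step v1 v2) s s' ∧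
      r = min (1 / rho2 v1 v2 s) (1 / rho1 v1 v2 s')} : Set ℝ) := Or.inl rfl
  refine ⟨?_, ?_, ?_⟩
  · -- value case
    set S := ({1} ∪ {r | ∃ s s', Relation.TransGen (step v1 v2) s s' ∧
      r = 1 / conflictF (rho2 v1 v2 s) (rho1 v1 v2 s')} : Set ℝ) with hS
    set A := sSup S with hA
    have hA1 : 1 ≤ A := le_csSup hbddV h1V
    have hApair : ∀ s s', Relation.TransGen (step v1 v2) s s' →
        1 / conflictF (rho2 v1 v2 s) (rho1 v1 v2 s') ≤ A :=
      fun s s' h => le_csSup hbddV (Or.inr ⟨s, s', h, rfl⟩)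
    obtain ⟨x1, x2, hT, hle⟩ := construct_V hv1 hv2 hA1 hApair
    have hmem : RV v1 v2 x1 x2 ∈ {r | ∃ x1 x2, InT v1 v2 x1 x2 ∧ RV v1 v2 x1 x2 = r} :=
      ⟨x1, x2, hT, rfl⟩
    have hlb : ∀ r ∈ {r | ∃ x1 x2, InT v1 v2 x1 x2 ∧ RV v1 v2 x1 x2 = r}, A ≤ r := by
      rintro r ⟨y1, y2, hTy, rfl⟩
      refine csSup_le ⟨1, h1V⟩ ?_
      rintro m (hm | ⟨s, s', hss, rfl⟩)
      · rw [hm]; exact one_le_RV hv1 hv2 hTy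
      · exact lower_V hv1 hv2 hTy hss
    exact le_antisymm (le_trans (csInf_le ⟨A, hlb⟩ hmem) hle)
      (le_csInf ⟨_, hmem⟩ hlb)
  · -- cost case
    set S := ({1} ∪ {r | ∃ s s', Relation.TransGen (step v1 v2) s s' ∧
      r = conflictF (1 / rho2 v1 v2 s) (1 / rho1 v1 v2 s')} : Set ℝ) with hS
    set B := sSup S with hB
    have hB1 : 1 ≤ B := le_csSup hbddC h1C
    have hBpair : ∀ s s', Relation.TransGen (step v1 v2) s s' →
        conflictF (1 / rho2 v1 v2 s) (1 / rho1 v1 v2 s') ≤ B :=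
      fun s s' h => le_csSup hbddC (Or.inr ⟨s, s', h, rfl⟩)
    obtain ⟨x1, x2, hT, hle⟩ := construct_C hv1 hv2 hB1 hBpair
    have hmem : RC v1 v2 x1 x2 ∈ {r | ∃ x1 x2, InT v1 v2 x1 x2 ∧ RC v1 v2 x1 x2 = r} :=
      ⟨x1, x2, hT, rfl⟩
    have hlb : ∀ r ∈ {r | ∃ x1 x2, InT v1 v2 x1 x2 ∧ RC v1 v2 x1 x2 = r}, B ≤ r := by
      rintro r ⟨y1, y2, hTy, rfl⟩
      refine csSup_le ⟨1, h1C⟩ ?_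
      rintro m (hm | ⟨s, s', hss, rfl⟩)
      · rw [hm]; exact one_le_RC hv1 hv2 hTy
      · exact lower_C hv1 hv2 hTy hss
    exact le_antisymm (le_trans (csInf_le ⟨B, hlb⟩ hmem) hle)
      (le_csInf ⟨_, hmem⟩ hlb)
  · -- deterministic case
    set S := ({1} ∪ {r | ∃ s s', Relation.TransGen (step v1 v2) s s' ∧
      r = min (1 / rho2 v1 v2 s) (1 / rho1 v1 v2 s')} : Set ℝ) with hS
    set D := sSup S with hD
    have hD1 : 1 ≤ D := le_csSup hbddD h1D
    have hDpair : ∀ s s', Relation.TransGen (step v1 v2) s s' →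
        min (1 / rho2 v1 v2 s) (1 / rho1 v1 v2 s') ≤ D :=
      fun s s' h => le_csSup hbddD (Or.inr ⟨s, s', h, rfl⟩)
    obtain ⟨x1, x2, hT, hDet, hle⟩ := construct_D hv1 hv2 hD1 hDpair
    have hmem : RC v1 v2 x1 x2 ∈
        {r | ∃ x1 x2, InT v1 v2 x1 x2 ∧ Deterministic x1 x2 ∧ RC v1 v2 x1 x2 = r} :=
      ⟨x1, x2, hT, hDet, rfl⟩
    have hlb : ∀ r ∈ {r | ∃ x1 x2, InT v1 v2 x1 x2 ∧ Deterministic x1 x2 ∧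
        RC v1 v2 x1 x2 = r}, D ≤ r := by
      rintro r ⟨y1, y2, hTy, hDy, rfl⟩
      refine csSup_le ⟨1, h1D⟩ ?_
      rintro m (hm | ⟨s, s', hss, rfl⟩)
      · rw [hm]; exact one_le_RC hv1 hv2 hTy
      · exact lower_D hv1 hv2 hTy hDy hss
    exact le_antisymm (le_trans (csInf_le ⟨D, hlb⟩ hmem) hle)
      (le_csInf ⟨_, hmem⟩ hlb)

end Stmt18
end

section
/- Let ρ = (ρ_i(s))_{i∈[n], s∈[k]^n} be performance ratios (ρ_i(s) ∈ (0,1] for all i,s, and for every profile s at least one agent i has ρ_i(s) = 1) with min_{i,s} ρ_i(s) ≥ 1 − 1/((n·k)² + 1). Then there exists a family of value functions v_i : [k]^n → ℝ_{>0} that is nondecreasing in every signal coordinate, satisfies submodularity over signals (SOS), and induces the given ratios: v_i(s)/max_{j∈[n]} v_j(s) = ρ_i(s) for all i, s. Likewise, there exists a family of cost functions c_i : [k]^n → ℝ_{>0}, nonincreasing in every coordinate and SOS, with min_{j∈[n]} c_j(s)/c_i(s) = ρ_i(s) for all i, s. -/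
set_option maxHeartbeats 1000000

private lemma G_bounds (P X : ℝ) (h1 : 1 ≤ X) (h2 : X ≤ P) :
    0 ≤ 1 + P ^ 2 - X ^ 2 ∧ 1 + P ^ 2 - X ^ 2 ≤ P ^ 2 := by
  constructor <;> nlinarith

private lemma val_mono_aux (P ε A B ra rb : ℝ) (hB : 1 ≤ B) (hAB : B + 1 ≤ A)
    (hA : A ≤ P) (hra : ra ≤ 1) (hrb : 1 - ε ≤ rb)
    (hε0 : 0 ≤ ε) (hεP : ε * P ^ 2 < 1) :
    ra * (1 + P ^ 2 - A ^ 2) ≤ rb * (1 + P ^ 2 - B ^ 2) := by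
  obtain ⟨hA0, hA1⟩ := G_bounds P A (by linarith) hA
  obtain ⟨hB0, hB1⟩ := G_bounds P B hB (by linarith)
  have e1 : ra * (1 + P ^ 2 - A ^ 2) ≤ 1 * (1 + P ^ 2 - A ^ 2) :=
    mul_le_mul_of_nonneg_right hra hA0
  have e2 : (1 - ε) * (1 + P ^ 2 - B ^ 2) ≤ rb * (1 + P ^ 2 - B ^ 2) :=
    mul_le_mul_of_nonneg_right hrb hB0
  have e3 : ε * (1 + P ^ 2 - B ^ 2) ≤ ε * P ^ 2 := mul_le_mul_of_nonneg_left hB1 hε0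
  nlinarith [mul_le_mul (le_refl (A - B)) (by linarith : (2:ℝ) ≤ A + B)
    (by norm_num) (by linarith : (0:ℝ) ≤ A - B)]

private lemma val_sos_aux (P ε A d e ra rb ra' rb' : ℝ)
    (hd : 1 ≤ d) (he : 1 ≤ e) (hB' : 1 ≤ A - d - e) (hA : A ≤ P)
    (hra : ra ≤ 1) (hra' : 1 - ε ≤ ra') (hrb : 1 - ε ≤ rb) (hrb' : rb' ≤ 1)
    (hε0 : 0 ≤ ε) (hεP : ε * P ^ 2 < 1) :
    rb' * (1 + P ^ 2 - (A - d - e) ^ 2) - ra' * (1 + P ^ 2 - (A - e) ^ 2)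
      ≤ rb * (1 + P ^ 2 - (A - d) ^ 2) - ra * (1 + P ^ 2 - A ^ 2) := by
  obtain ⟨hGA0, hGA1⟩ := G_bounds P A (by linarith) hA
  obtain ⟨hGB0, hGB1⟩ := G_bounds P (A - d) (by linarith) (by linarith)
  obtain ⟨hGA0', hGA1'⟩ := G_bounds P (A - e) (by linarith) (by linarith)
  obtain ⟨hGB0', hGB1'⟩ := G_bounds P (A - d - e) hB' (by linarith)
  have e1 : ra * (1 + P ^ 2 - A ^ 2) ≤ 1 * (1 + P ^ 2 - A ^ 2) :=
    mul_le_mul_of_nonneg_right hra hGA0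
  have e2 : (1 - ε) * (1 + P ^ 2 - (A - d) ^ 2) ≤ rb * (1 + P ^ 2 - (A - d) ^ 2) :=
    mul_le_mul_of_nonneg_right hrb hGB0
  have e3 : rb' * (1 + P ^ 2 - (A - d - e) ^ 2) ≤ 1 * (1 + P ^ 2 - (A - d - e) ^ 2) :=
    mul_le_mul_of_nonneg_right hrb' hGB0'
  have e4 : (1 - ε) * (1 + P ^ 2 - (A - e) ^ 2) ≤ ra' * (1 + P ^ 2 - (A - e) ^ 2) :=
    mul_le_mul_of_nonneg_right hra' hGA0'
  have e5 : ε * (1 + P ^ 2 - (A - d) ^ 2) ≤ ε * P ^ 2 := mul_le_mul_of_nonneg_left hGB1 hε0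
  have e6 : ε * (1 + P ^ 2 - (A - e) ^ 2) ≤ ε * P ^ 2 := mul_le_mul_of_nonneg_left hGA1' hε0
  have hde : (1:ℝ) ≤ d * e := by nlinarith
  have key : ((1 + P ^ 2 - (A - d) ^ 2) - (1 + P ^ 2 - A ^ 2))
      - ((1 + P ^ 2 - (A - d - e) ^ 2) - (1 + P ^ 2 - (A - e) ^ 2)) = 2 * (d * e) := by ring
  linarith

private lemma div_bounds (X r ε : ℝ) (hX : 0 ≤ X) (h1 : 1 - ε ≤ r) (h2 : r ≤ 1) (h0 : 0 < r)
    (hε : 0 < 1 - ε) : X ≤ X / r ∧ X / r ≤ X / (1 - ε) := by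
  constructor
  · rw [le_div_iff₀ h0]; nlinarith
  · rw [div_le_div_iff₀ h0 hε]; nlinarith

private lemma cost_mono_aux (P ε A B ra rb : ℝ) (hB : 1 ≤ B) (hAB : B + 1 ≤ A)
    (hA : A ≤ P) (hra : ra ≤ 1) (hra0 : 0 < ra) (hrb : 1 - ε ≤ rb) (hrb0 : 0 < rb)
    (hε0 : 0 ≤ ε) (hεP : ε * P ^ 2 < 1) :
    B ^ 2 / rb ≤ A ^ 2 / ra := by
  rw [div_le_div_iff₀ hrb0 hra0]
  have h1 : B ^ 2 * ra ≤ B ^ 2 * 1 := mul_le_mul_of_nonneg_left hra (sq_nonneg B)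
  have h2 : A ^ 2 * (1 - ε) ≤ A ^ 2 * rb := mul_le_mul_of_nonneg_left hrb (sq_nonneg A)
  have h3 : ε * A ^ 2 ≤ ε * P ^ 2 := mul_le_mul_of_nonneg_left (by nlinarith) hε0
  nlinarith

private lemma cost_sos_aux (P ε A d e ra rb ra' rb' : ℝ)
    (hd : 1 ≤ d) (he : 1 ≤ e) (hB' : 1 ≤ A - d - e) (hA : A ≤ P)
    (hra : 1 - ε ≤ ra) (hra1 : ra ≤ 1) (hra0 : 0 < ra)
    (hrb : 1 - ε ≤ rb) (hrb1 : rb ≤ 1) (hrb0 : 0 < rb)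
    (hra' : 1 - ε ≤ ra') (hra1' : ra' ≤ 1) (hra0' : 0 < ra')
    (hrb' : 1 - ε ≤ rb') (hrb1' : rb' ≤ 1) (hrb0' : 0 < rb')
    (hε0 : 0 ≤ ε) (hεP : ε * P ^ 2 < 1) :
    (A - e) ^ 2 / ra' - (A - d - e) ^ 2 / rb' ≤ A ^ 2 / ra - (A - d) ^ 2 / rb := by
  have hP2 : (1:ℝ) ≤ P ^ 2 := by nlinarith
  have hε1 : 0 < 1 - ε := by nlinarith
  obtain ⟨q1, q2⟩ := div_bounds ((A - e) ^ 2) ra' ε (sq_nonneg _) hra' hra1' hra0' hε1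
  obtain ⟨q3, q4⟩ := div_bounds ((A - d - e) ^ 2) rb' ε (sq_nonneg _) hrb' hrb1' hrb0' hε1
  obtain ⟨q5, q6⟩ := div_bounds (A ^ 2) ra ε (sq_nonneg _) hra hra1 hra0 hε1
  obtain ⟨q7, q8⟩ := div_bounds ((A - d) ^ 2) rb ε (sq_nonneg _) hrb hrb1 hrb0 hε1
  have hde : (1:ℝ) ≤ d * e := by nlinarith
  have b1 : ε * A ^ 2 ≤ ε * P ^ 2 := mul_le_mul_of_nonneg_left (by nlinarith) hε0
  have b2 : ε * (A - d - e) ^ 2 ≤ ε * P ^ 2 := mul_le_mul_of_nonneg_left (by nlinarith) hε0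
  have key : (A ^ 2 + (A - d - e) ^ 2) - (A - e) ^ 2 - (A - d) ^ 2 = 2 * (d * e) := by ring
  have mid2 : ((A - e) ^ 2 + (A - d) ^ 2) / (1 - ε) ≤ A ^ 2 + (A - d - e) ^ 2 := by
    rw [div_le_iff₀ hε1]
    nlinarith [b1, b2, key, hde, hεP]
  have msplit : (A - e) ^ 2 / (1 - ε) + (A - d) ^ 2 / (1 - ε)
      = ((A - e) ^ 2 + (A - d) ^ 2) / (1 - ε) := (add_div _ _ _).symm
  linarith

private lemma sum_update' (n k : ℕ) (s : Fin n → Fin k) (j : Fin n) (a : Fin k) :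
    ∑ l, ((Function.update s j a l : ℕ) : ℝ)
      = (∑ l ∈ Finset.univ.erase j, ((s l : ℕ) : ℝ)) + ((a : ℕ) : ℝ) := by
  have h : (fun l => ((Function.update s j a l : ℕ) : ℝ))
      = Function.update (fun l => ((s l : ℕ) : ℝ)) j ((a : ℕ) : ℝ) := by
    funext l
    rcases eq_or_ne l j with rfl | h
    · simp
    · simp [Function.update_of_ne h]
  calc ∑ l, ((Function.update s j a l : ℕ) : ℝ)
      = ∑ l, Function.update (fun l => ((s l : ℕ) : ℝ)) j ((a : ℕ) : ℝ) l := by rw [← h]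
    _ = ((a : ℕ) : ℝ) + ∑ l ∈ Finset.univ \ {j}, ((s l : ℕ) : ℝ) :=
        Finset.sum_update_of_mem (Finset.mem_univ j) _ _
    _ = (∑ l ∈ Finset.univ.erase j, ((s l : ℕ) : ℝ)) + ((a : ℕ) : ℝ) := by
        rw [Finset.sdiff_singleton_eq_erase, add_comm]

private lemma erase_sum_bound (n k : ℕ) [NeZero n] [NeZero k]
    (s : Fin n → Fin k) (j : Fin n) (x : Fin k) :
    (∑ l ∈ Finset.univ.erase j, ((s l : ℕ) : ℝ)) + ((x : ℕ) : ℝ)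
      ≤ (n : ℝ) * ((k : ℝ) - 1) := by
  have hterm : ∀ y : Fin k, ((y : ℕ) : ℝ) ≤ (k : ℝ) - 1 := by
    intro y
    have : ((y : ℕ) : ℝ) + 1 ≤ (k : ℝ) := by exact_mod_cast Nat.succ_le_of_lt y.isLt
    linarith
  have h1 : (∑ l ∈ Finset.univ.erase j, ((s l : ℕ) : ℝ))
      ≤ ∑ _l ∈ Finset.univ.erase j, ((k : ℝ) - 1) :=
    Finset.sum_le_sum fun l _ => hterm _
  have hcard : (Finset.univ.erase j).card = n - 1 := by
    rw [Finset.card_erase_of_mem (Finset.mem_univ j), Finset.card_univ, Fintype.card_fin]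
  have hn1 : 1 ≤ n := Nat.one_le_iff_ne_zero.mpr (NeZero.ne n)
  have h2 : ∑ _l ∈ Finset.univ.erase j, ((k : ℝ) - 1) = ((n : ℝ) - 1) * ((k : ℝ) - 1) := by
    rw [Finset.sum_const, hcard, nsmul_eq_mul, Nat.cast_sub hn1, Nat.cast_one]
  have hk1 : (1 : ℝ) ≤ (k : ℝ) := by exact_mod_cast Nat.one_le_iff_ne_zero.mpr (NeZero.ne k)
  have hn1' : (1 : ℝ) ≤ (n : ℝ) := by exact_mod_cast hn1
  nlinarith [hterm x]

/-- performance ratios with all values at least `1 - 1/((nk)² + 1)` are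
induced by nondecreasing SOS value functions, and by nonincreasing SOS cost functions. -/
theorem stmt19 (n k : ℕ) [NeZero n] [NeZero k]
    (ρ : Fin n → (Fin n → Fin k) → ℝ)
    (hρ : ∀ i s, 0 < ρ i s ∧ ρ i s ≤ 1)
    (hρ1 : ∀ s, ∃ i, ρ i s = 1)
    (hmin : ∀ i s, 1 - 1 / (((n : ℝ) * k) ^ 2 + 1) ≤ ρ i s) :
    (∃ v : Fin n → (Fin n → Fin k) → ℝ,
      (∀ i s, 0 < v i s) ∧
      -- nondecreasing in every signal coordinate
      (∀ (i j : Fin n) (s : Fin n → Fin k) (a b : Fin k), a ≤ b →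
        v i (Function.update s j a) ≤ v i (Function.update s j b)) ∧
      -- submodularity over signals
      (∀ (i j : Fin n) (a b : Fin k), a ≤ b → ∀ s s' : Fin n → Fin k,
        (∀ l, l ≠ j → s l ≤ s' l) →
        v i (Function.update s' j b) - v i (Function.update s' j a)
          ≤ v i (Function.update s j b) - v i (Function.update s j a)) ∧
      -- induces the given ratios
      (∀ i s, v i s / (Finset.univ.sup' Finset.univ_nonempty (fun j => v j s)) = ρ i s)) ∧
    (∃ c : Fin n → (Fin n → Fin k) → ℝ,
      (∀ i s, 0 < c i s) ∧
      -- nonincreasing in every signal coordinate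
      (∀ (i j : Fin n) (s : Fin n → Fin k) (a b : Fin k), a ≤ b →
        c i (Function.update s j b) ≤ c i (Function.update s j a)) ∧
      -- submodularity over signals
      (∀ (i j : Fin n) (a b : Fin k), a ≤ b → ∀ s s' : Fin n → Fin k,
        (∀ l, l ≠ j → s l ≤ s' l) →
        c i (Function.update s' j a) - c i (Function.update s' j b)
          ≤ c i (Function.update s j a) - c i (Function.update s j b)) ∧
      -- induces the given ratios
      (∀ i s, (Finset.univ.inf' Finset.univ_nonempty (fun j => c j s)) / c i s = ρ i s)) := by
  have hn1 : (1 : ℝ) ≤ (n : ℝ) := by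
    exact_mod_cast Nat.one_le_iff_ne_zero.mpr (NeZero.ne n)
  have hk1 : (1 : ℝ) ≤ (k : ℝ) := by
    exact_mod_cast Nat.one_le_iff_ne_zero.mpr (NeZero.ne k)
  set ε : ℝ := 1 / (((n : ℝ) * k) ^ 2 + 1) with hεdef
  set P : ℝ := (n : ℝ) * ((k : ℝ) - 1) + 1 with hPdef
  have hP1 : 1 ≤ P := by nlinarith
  have hPnk : P ≤ (n : ℝ) * k := by nlinarith
  have hQ1 : (1 : ℝ) ≤ ((n : ℝ) * k) ^ 2 := by nlinarith
  have hε0 : 0 ≤ ε := by positivity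
  have hεP : ε * P ^ 2 < 1 := by
    rw [hεdef, div_mul_eq_mul_div, one_mul, div_lt_one (by linarith)]
    nlinarith
  have hρlb : ∀ i s, 1 - ε ≤ ρ i s := hmin
  set S : (Fin n → Fin k) → ℝ := fun s => ∑ l, ((s l : ℕ) : ℝ) with hSdef
  set T : Fin n → (Fin n → Fin k) → ℝ :=
    fun j s => ∑ l ∈ Finset.univ.erase j, ((s l : ℕ) : ℝ) with hTdef
  have hS0 : ∀ s, 0 ≤ S s := fun s => Finset.sum_nonneg fun l _ => by positivity
  have hT0 : ∀ j s, 0 ≤ T j s := fun j s => Finset.sum_nonneg fun l _ => by positivity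
  have hSu : ∀ s (j : Fin n) (a : Fin k),
      S (Function.update s j a) = T j s + ((a : ℕ) : ℝ) := fun s j a => sum_update' n k s j a
  have hTb : ∀ (j : Fin n) s (x : Fin k), T j s + ((x : ℕ) : ℝ) ≤ P - 1 := by
    intro j s x
    have := erase_sum_bound n k s j x
    simp only [hPdef]
    linarith
  have hSP : ∀ s, S s ≤ P - 1 := by
    intro s
    have h := hTb 0 s (s 0)
    rw [← hSu s 0 (s 0)] at h
    rwa [Function.update_eq_self] at h
  have hTmono : ∀ (j : Fin n) s s', (∀ l, l ≠ j → s l ≤ s' l) → T j s ≤ T j s' := by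
    intro j s s' h
    apply Finset.sum_le_sum
    intro l hl
    have hlj := (Finset.mem_erase.mp hl).1
    exact_mod_cast h l hlj
  -- bounds on r's
  have hρub : ∀ i s, ρ i s ≤ 1 := fun i s => (hρ i s).2
  constructor
  · -- value functions
    refine ⟨fun i s => ρ i s * (1 + P ^ 2 - (P - S s) ^ 2), ?_, ?_, ?_, ?_⟩
    · intro i s
      have := (G_bounds P (P - S s) (by linarith [hSP s]) (by linarith [hS0 s])).1
      have h1 : (P - S s) ^ 2 ≤ P ^ 2 := by nlinarith [hS0 s, hSP s]
      exact mul_pos (hρ i s).1 (by nlinarith)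
    · intro i j s a b hab
      rcases eq_or_lt_of_le hab with rfl | hlt
      · exact le_refl _
      · have hab' : ((a : ℕ) : ℝ) + 1 ≤ ((b : ℕ) : ℝ) := by
          exact_mod_cast Nat.succ_le_of_lt hlt
        have ha0 : (0 : ℝ) ≤ ((a : ℕ) : ℝ) := by positivity
        simp only
        rw [hSu s j a, hSu s j b]
        exact val_mono_aux P ε (P - (T j s + ((a : ℕ) : ℝ))) (P - (T j s + ((b : ℕ) : ℝ)))
          _ _ (by linarith [hTb j s b]) (by linarith) (by linarith [hT0 j s])
          (hρub _ _) (hρlb _ _) hε0 hεP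
    · intro i j a b hab s s' hss'
      rcases eq_or_lt_of_le hab with rfl | hlt
      · simp
      · have hTle := hTmono j s s' hss'
        rcases eq_or_lt_of_le hTle with heq | hTlt
        · have hupd : ∀ x : Fin k, Function.update s j x = Function.update s' j x := by
            have hle : ∀ l ∈ Finset.univ.erase j, ((s l : ℕ) : ℝ) ≤ ((s' l : ℕ) : ℝ) := by
              intro l hl
              exact_mod_cast hss' l (Finset.mem_erase.mp hl).1
            have hpt := (Finset.sum_eq_sum_iff_of_le hle).mp heq
            intro x
            funext l
            rcases eq_or_ne l j with rfl | h
            · simp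
            · simp only [Function.update_of_ne h]
              have := hpt l (Finset.mem_erase.mpr ⟨h, Finset.mem_univ l⟩)
              exact Fin.ext (by exact_mod_cast this)
          rw [hupd a, hupd b]
        · have hT1 : T j s + 1 ≤ T j s' := by
            have e1 : T j s = ((∑ l ∈ Finset.univ.erase j, (s l : ℕ)) : ℝ) := by
              rw [hTdef]; try push_cast; try ring
            have e2 : T j s' = ((∑ l ∈ Finset.univ.erase j, (s' l : ℕ)) : ℝ) := by
              rw [hTdef]; try push_cast; try ring
            rw [e1, e2]
            rw [e1, e2] at hTlt
            exact_mod_cast Nat.succ_le_of_lt (by exact_mod_cast hTlt)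
          have hab' : ((a : ℕ) : ℝ) + 1 ≤ ((b : ℕ) : ℝ) := by
            exact_mod_cast Nat.succ_le_of_lt hlt
          have ha0 : (0 : ℝ) ≤ ((a : ℕ) : ℝ) := by positivity
          simp only
          rw [hSu s j a, hSu s j b, hSu s' j a, hSu s' j b]
          have h := val_sos_aux P ε (P - (T j s + ((a : ℕ) : ℝ)))
            (((b : ℕ) : ℝ) - ((a : ℕ) : ℝ)) (T j s' - T j s)
            (ρ i (Function.update s j a)) (ρ i (Function.update s j b))
            (ρ i (Function.update s' j a)) (ρ i (Function.update s' j b))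
            (by linarith) (by linarith)
            (by linarith [hTb j s' b]) (by linarith [hT0 j s])
            (hρub _ _) (hρlb _ _) (hρlb _ _) (hρub _ _) hε0 hεP
          rw [show P - (T j s + ((a : ℕ) : ℝ)) - (((b : ℕ) : ℝ) - ((a : ℕ) : ℝ))
                - (T j s' - T j s) = P - (T j s' + ((b : ℕ) : ℝ)) by ring,
              show P - (T j s + ((a : ℕ) : ℝ)) - (((b : ℕ) : ℝ) - ((a : ℕ) : ℝ))
                = P - (T j s + ((b : ℕ) : ℝ)) by ring,
              show P - (T j s + ((a : ℕ) : ℝ)) - (T j s' - T j s)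
                = P - (T j s' + ((a : ℕ) : ℝ)) by ring] at h
          exact h
    · intro i s
      have hg1 : (1 : ℝ) ≤ 1 + P ^ 2 - (P - S s) ^ 2 := by nlinarith [hS0 s, hSP s]
      have hsup : (Finset.univ.sup' Finset.univ_nonempty
          (fun j => ρ j s * (1 + P ^ 2 - (P - S s) ^ 2))) = 1 + P ^ 2 - (P - S s) ^ 2 := by
        apply le_antisymm
        · apply Finset.sup'_le
          intro j _
          nlinarith [(hρ j s).1, (hρ j s).2]
        · obtain ⟨i0, h0⟩ := hρ1 s
          have heq : ρ i0 s * (1 + P ^ 2 - (P - S s) ^ 2) = 1 + P ^ 2 - (P - S s) ^ 2 := by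
            rw [h0, one_mul]
          calc 1 + P ^ 2 - (P - S s) ^ 2 = ρ i0 s * (1 + P ^ 2 - (P - S s) ^ 2) := heq.symm
            _ ≤ _ := Finset.le_sup' (fun j => ρ j s * (1 + P ^ 2 - (P - S s) ^ 2)) (Finset.mem_univ i0)
      simp only
      rw [hsup, mul_div_assoc, div_self (by linarith : (1 : ℝ) + P ^ 2 - (P - S s) ^ 2 ≠ 0),
        mul_one]
  · -- cost functions
    refine ⟨fun i s => (P - S s) ^ 2 / ρ i s, ?_, ?_, ?_, ?_⟩
    · intro i s
      have h1 : (0 : ℝ) < P - S s := by linarith [hSP s]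
      exact div_pos (by positivity) (hρ i s).1
    · intro i j s a b hab
      rcases eq_or_lt_of_le hab with rfl | hlt
      · exact le_refl _
      · have hab' : ((a : ℕ) : ℝ) + 1 ≤ ((b : ℕ) : ℝ) := by
          exact_mod_cast Nat.succ_le_of_lt hlt
        have ha0 : (0 : ℝ) ≤ ((a : ℕ) : ℝ) := by positivity
        simp only
        rw [hSu s j a, hSu s j b]
        exact cost_mono_aux P ε (P - (T j s + ((a : ℕ) : ℝ))) (P - (T j s + ((b : ℕ) : ℝ)))
          _ _ (by linarith [hTb j s b]) (by linarith) (by linarith [hT0 j s])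
          (hρub _ _) (hρ _ _).1 (hρlb _ _) (hρ _ _).1 hε0 hεP
    · intro i j a b hab s s' hss'
      rcases eq_or_lt_of_le hab with rfl | hlt
      · simp
      · have hTle := hTmono j s s' hss'
        rcases eq_or_lt_of_le hTle with heq | hTlt
        · have hupd : ∀ x : Fin k, Function.update s j x = Function.update s' j x := by
            have hle : ∀ l ∈ Finset.univ.erase j, ((s l : ℕ) : ℝ) ≤ ((s' l : ℕ) : ℝ) := by
              intro l hl
              exact_mod_cast hss' l (Finset.mem_erase.mp hl).1
            have hpt := (Finset.sum_eq_sum_iff_of_le hle).mp heq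
            intro x
            funext l
            rcases eq_or_ne l j with rfl | h
            · simp
            · simp only [Function.update_of_ne h]
              have := hpt l (Finset.mem_erase.mpr ⟨h, Finset.mem_univ l⟩)
              exact Fin.ext (by exact_mod_cast this)
          rw [hupd a, hupd b]
        · have hT1 : T j s + 1 ≤ T j s' := by
            have e1 : T j s = ((∑ l ∈ Finset.univ.erase j, (s l : ℕ)) : ℝ) := by
              rw [hTdef]; try push_cast; try ring
            have e2 : T j s' = ((∑ l ∈ Finset.univ.erase j, (s' l : ℕ)) : ℝ) := by
              rw [hTdef]; try push_cast; try ring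
            rw [e1, e2]
            rw [e1, e2] at hTlt
            exact_mod_cast Nat.succ_le_of_lt (by exact_mod_cast hTlt)
          have hab' : ((a : ℕ) : ℝ) + 1 ≤ ((b : ℕ) : ℝ) := by
            exact_mod_cast Nat.succ_le_of_lt hlt
          have ha0 : (0 : ℝ) ≤ ((a : ℕ) : ℝ) := by positivity
          simp only
          rw [hSu s j a, hSu s j b, hSu s' j a, hSu s' j b]
          have h := cost_sos_aux P ε (P - (T j s + ((a : ℕ) : ℝ)))
            (((b : ℕ) : ℝ) - ((a : ℕ) : ℝ)) (T j s' - T j s)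
            (ρ i (Function.update s j a)) (ρ i (Function.update s j b))
            (ρ i (Function.update s' j a)) (ρ i (Function.update s' j b))
            (by linarith) (by linarith)
            (by linarith [hTb j s' b]) (by linarith [hT0 j s])
            (hρlb _ _) (hρub _ _) (hρ _ _).1
            (hρlb _ _) (hρub _ _) (hρ _ _).1
            (hρlb _ _) (hρub _ _) (hρ _ _).1
            (hρlb _ _) (hρub _ _) (hρ _ _).1 hε0 hεP
          rw [show P - (T j s + ((a : ℕ) : ℝ)) - (((b : ℕ) : ℝ) - ((a : ℕ) : ℝ))
                - (T j s' - T j s) = P - (T j s' + ((b : ℕ) : ℝ)) by ring,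
              show P - (T j s + ((a : ℕ) : ℝ)) - (((b : ℕ) : ℝ) - ((a : ℕ) : ℝ))
                = P - (T j s + ((b : ℕ) : ℝ)) by ring,
              show P - (T j s + ((a : ℕ) : ℝ)) - (T j s' - T j s)
                = P - (T j s' + ((a : ℕ) : ℝ)) by ring] at h
          exact h
    · intro i s
      have hgt : (0 : ℝ) < P - S s := by linarith [hSP s]
      have hne : (P - S s) ^ 2 ≠ 0 := by positivity
      have hinf : (Finset.univ.inf' Finset.univ_nonempty
          (fun j => (P - S s) ^ 2 / ρ j s)) = (P - S s) ^ 2 := by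
        apply le_antisymm
        · obtain ⟨i0, h0⟩ := hρ1 s
          calc Finset.univ.inf' Finset.univ_nonempty (fun j => (P - S s) ^ 2 / ρ j s)
              ≤ (P - S s) ^ 2 / ρ i0 s := Finset.inf'_le _ (Finset.mem_univ i0)
            _ = (P - S s) ^ 2 := by rw [h0, div_one]
        · apply Finset.le_inf'
          intro j _
          rw [le_div_iff₀ (hρ j s).1]
          nlinarith [(hρ j s).2, sq_nonneg (P - S s)]
      simp only
      rw [hinf, div_div_eq_mul_div, mul_comm, mul_div_assoc, div_self hne, mul_one]
end
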